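/- arXiv:2406.11531 — 2 statements merged into one kernel-verified Lean document; each statement's English description precedes it below -/
import Mathlib

section
/- Let 0 < p ≤ t < ∞ and let W be a matrix weight on ℝⁿ. Then L^t(W) embeds continuously into M_p^{t,∞}(W), and M_p^{t,∞}(W) embeds continuously into L^p_loc(W): for every compact K ⊂ ℝⁿ there is a constant C_K with ‖f χ_K‖_{L^p(W)} ≤ C_K ‖f‖_{M_p^{t,∞}(W)}. -/
open MeasureTheory ENNReal Matrix
open scoped ENNReal ComplexOrder

noncomputable section

variable {n d : ℕ}

/-- The `α`-th power of a (Hermitian) matrix via spectral decomposition. -/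
def mpow (A : Matrix (Fin d) (Fin d) ℂ) (α : ℝ) : Matrix (Fin d) (Fin d) ℂ :=
  if hA : A.IsHermitian then
    (hA.eigenvectorUnitary : Matrix (Fin d) (Fin d) ℂ) *
      Matrix.diagonal (fun i => ((hA.eigenvalues i ^ α : ℝ) : ℂ)) *
      (star (hA.eigenvectorUnitary : Matrix (Fin d) (Fin d) ℂ))
  else 0

/-- Euclidean norm of a vector in `ℂ^d`. -/
def evnorm (v : Fin d → ℂ) : ℝ := ‖(WithLp.equiv 2 (Fin d → ℂ)).symm v‖

/-- Operator (spectral) norm of a matrix. -/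
def matNorm (A : Matrix (Fin d) (Fin d) ℂ) : ℝ := ‖Matrix.toEuclideanCLM (𝕜 := ℂ) A‖

/-- A matrix weight: nonnegative definite values, a.e. invertible, locally
integrable entries. -/
structure IsMatrixWeight (W : (Fin n → ℝ) → Matrix (Fin d) (Fin d) ℂ) : Prop where
  posSemidef : ∀ x, (W x).PosSemidef
  invertible : ∀ᵐ x ∂(volume : Measure (Fin n → ℝ)), IsUnit (W x)
  locInt : ∀ i j, MeasureTheory.LocallyIntegrable (fun x => W x i j) volume

/-- The dyadic cube `Q_{j,k} = ∏ᵢ [2^{-j} kᵢ, 2^{-j}(kᵢ+1))`. -/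
def dyadicCube (j : ℤ) (k : Fin n → ℤ) : Set (Fin n → ℝ) :=
  {x | ∀ i, (2:ℝ) ^ (-j) * k i ≤ x i ∧ x i < (2:ℝ) ^ (-j) * (k i + 1)}

/-- The `i`-th dyadic ancestor of `Q_{j,k}`. -/
def dyadicParent (i : ℕ) (j : ℤ) (k : Fin n → ℤ) : Set (Fin n → ℝ) :=
  dyadicCube (j - i) (fun m => Int.fdiv (k m) (2 ^ i))

/-- The axis-parallel cube with center `c` and side length `l`. -/
def cubeC (c : Fin n → ℝ) (l : ℝ) : Set (Fin n → ℝ) :=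
  {x | ∀ i, c i - l / 2 ≤ x i ∧ x i < c i + l / 2}

/-- `W(Q) = ∫_Q ‖W(y)‖ dy`. -/
def cubeWeight (W : (Fin n → ℝ) → Matrix (Fin d) (Fin d) ℂ) (Q : Set (Fin n → ℝ)) : ℝ≥0∞ :=
  ∫⁻ y in Q, ENNReal.ofReal (matNorm (W y))

/-- The single-cube term of the Bourgain-Morrey norm. -/
def BMterm (W : (Fin n → ℝ) → Matrix (Fin d) (Fin d) ℂ) (p t : ℝ)
    (f : (Fin n → ℝ) → Fin d → ℂ) (j : ℤ) (k : Fin n → ℤ) : ℝ≥0∞ :=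
  cubeWeight W (dyadicCube j k) ^ (1 / t - 1 / p) *
    (∫⁻ y in dyadicCube j k,
      ENNReal.ofReal (evnorm ((mpow (W y) (1 / p)).mulVec (f y)) ^ p)) ^ (1 / p)

/-- The matrix weighted Bourgain-Morrey norm of `M_p^{t,r}(W)`. -/
def BMnorm (W : (Fin n → ℝ) → Matrix (Fin d) (Fin d) ℂ) (p t : ℝ) (r : ℝ≥0∞)
    (f : (Fin n → ℝ) → Fin d → ℂ) : ℝ≥0∞ :=
  if r = ∞ then ⨆ jk : ℤ × (Fin n → ℤ), BMterm W p t f jk.1 jk.2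
  else (∑' jk : ℤ × (Fin n → ℤ), BMterm W p t f jk.1 jk.2 ^ r.toReal) ^ (1 / r.toReal)

/-- Matrix Muckenhoupt class `𝒜_p`, `1 ≤ p < ∞`. -/
def MatrixAp (p : ℝ) (W : (Fin n → ℝ) → Matrix (Fin d) (Fin d) ℂ) : Prop :=
  if p = 1 then
    ∃ C : ℝ≥0∞, C ≠ ∞ ∧ ∀ (c : Fin n → ℝ) (l : ℝ), 0 < l →
      essSup (fun y => (volume (cubeC c l))⁻¹ *
          ∫⁻ x in cubeC c l, ENNReal.ofReal (matNorm (W x * mpow (W y) (-1))))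
        (volume.restrict (cubeC c l)) ≤ C
  else
    ∃ C : ℝ≥0∞, C ≠ ∞ ∧ ∀ (c : Fin n → ℝ) (l : ℝ), 0 < l →
      (volume (cubeC c l))⁻¹ * ∫⁻ x in cubeC c l,
          ((volume (cubeC c l))⁻¹ * ∫⁻ y in cubeC c l,
            ENNReal.ofReal (matNorm (mpow (W x) (1 / p) * mpow (W y) (-(1 / p)))
              ^ (p / (p - 1)))) ^ (p - 1) ≤ C

/-- `W` has `𝒜_p`-dimension (bound) `δ`. -/
def HasApDim (p : ℝ) (W : (Fin n → ℝ) → Matrix (Fin d) (Fin d) ℂ) (δ : ℝ) : Prop :=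
  if p ≤ 1 then
    ∃ C : ℝ≥0∞, C ≠ ∞ ∧ ∀ (c : Fin n → ℝ) (l : ℝ), 0 < l → ∀ i : ℕ,
      essSup (fun y => (volume (cubeC c l))⁻¹ *
          ∫⁻ x in cubeC c l,
            ENNReal.ofReal (matNorm (mpow (W x) (1 / p) * mpow (W y) (-(1 / p))) ^ p))
        (volume.restrict (cubeC c (2 ^ i * l))) ≤ C * 2 ^ ((i : ℝ) * δ)
  else
    ∃ C : ℝ≥0∞, C ≠ ∞ ∧ ∀ (c : Fin n → ℝ) (l : ℝ), 0 < l → ∀ i : ℕ,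
      (volume (cubeC c l))⁻¹ * ∫⁻ x in cubeC c l,
          ((volume (cubeC c (2 ^ i * l)))⁻¹ * ∫⁻ y in cubeC c (2 ^ i * l),
            ENNReal.ofReal (matNorm (mpow (W x) (1 / p) * mpow (W y) (-(1 / p)))
              ^ (p / (p - 1)))) ^ (p - 1) ≤ C * 2 ^ ((i : ℝ) * δ)

/-- A family of reducing operators of order `p` for `W`, over dyadic cubes. -/
def IsReducingOp (p : ℝ) (W : (Fin n → ℝ) → Matrix (Fin d) (Fin d) ℂ)
    (A : ℤ → (Fin n → ℤ) → Matrix (Fin d) (Fin d) ℂ) : Prop :=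
  (∀ j k, (A j k).PosDef) ∧
  ∃ c₁ c₂ : ℝ, 0 < c₁ ∧ 0 < c₂ ∧ ∀ (j : ℤ) (k : Fin n → ℤ) (z : Fin d → ℂ),
    c₁ * evnorm ((A j k).mulVec z) ≤
        ((volume (dyadicCube j k)).toReal⁻¹ *
          ∫ x in dyadicCube j k, evnorm ((mpow (W x) (1 / p)).mulVec z) ^ p) ^ (1 / p) ∧
    ((volume (dyadicCube j k)).toReal⁻¹ *
          ∫ x in dyadicCube j k, evnorm ((mpow (W x) (1 / p)).mulVec z) ^ p) ^ (1 / p) ≤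
      c₂ * evnorm ((A j k).mulVec z)

/-- The dyadic average operator `E_{d,a}` at scale `2^a`. -/
def dyadicAvg (a : ℤ) (f : (Fin n → ℝ) → Fin d → ℂ) (x : Fin n → ℝ) : Fin d → ℂ :=
  ⨍ y in dyadicCube (-a) (fun i => ⌊x i / (2:ℝ) ^ a⌋), f y

/-- Membership in the Bourgain-Morrey space. -/
def MemBM (W : (Fin n → ℝ) → Matrix (Fin d) (Fin d) ℂ) (p t : ℝ) (r : ℝ≥0∞)
    (f : (Fin n → ℝ) → Fin d → ℂ) : Prop :=
  AEStronglyMeasurable f (volume : Measure (Fin n → ℝ)) ∧ BMnorm W p t r f < ∞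

/-- Euclidean norm on `ℝ^n`. -/
def ernorm (x : Fin n → ℝ) : ℝ := ‖(WithLp.equiv 2 (Fin n → ℝ)).symm x‖


/-- Euclidean ball `B(0,R)` in `ℝ^n`. -/
def euclBall {n : ℕ} (R : ℝ) : Set (Fin n → ℝ) := {x | ernorm x < R}

/-- Local `L^p(W)` norm over a set `K`. -/
def locLpNorm (W : (Fin n → ℝ) → Matrix (Fin d) (Fin d) ℂ) (p : ℝ)
    (f : (Fin n → ℝ) → Fin d → ℂ) (K : Set (Fin n → ℝ)) : ℝ≥0∞ :=
  (∫⁻ x in K, ENNReal.ofReal (evnorm ((mpow (W x) (1 / p)).mulVec (f x)) ^ p)) ^ (1 / p)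

/-- Total boundedness of a family in `M_p^{t,r}(W)`. -/
def BMTotallyBounded (W : (Fin n → ℝ) → Matrix (Fin d) (Fin d) ℂ) (p t : ℝ) (r : ℝ≥0∞)
    (F : Set ((Fin n → ℝ) → Fin d → ℂ)) : Prop :=
  ∀ ε : ℝ≥0∞, 0 < ε → ∃ G : Set ((Fin n → ℝ) → Fin d → ℂ), G.Finite ∧
    ∀ f ∈ F, ∃ g ∈ G, BMnorm W p t r (fun x => f x - g x) < ε

section Helpers
variable {d : ℕ}

lemma aux_mulVec_eq (A : Matrix (Fin d) (Fin d) ℂ) (v : Fin d → ℂ) :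
    Matrix.toEuclideanCLM (𝕜 := ℂ) A ((WithLp.equiv 2 (Fin d → ℂ)).symm v) =
      (WithLp.equiv 2 (Fin d → ℂ)).symm (A.mulVec v) := by
  rfl

lemma evnorm_nonneg (v : Fin d → ℂ) : 0 ≤ evnorm v := norm_nonneg _

lemma matNorm_nonneg (A : Matrix (Fin d) (Fin d) ℂ) : 0 ≤ matNorm A := norm_nonneg _

lemma evnorm_mulVec_le (A : Matrix (Fin d) (Fin d) ℂ) (v : Fin d → ℂ) :
    evnorm (A.mulVec v) ≤ matNorm A * evnorm v := by
  have h := (Matrix.toEuclideanCLM (𝕜 := ℂ) A).le_opNorm ((WithLp.equiv 2 (Fin d → ℂ)).symm v)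
  rw [aux_mulVec_eq] at h
  exact h

lemma evnorm_coe (v : EuclideanSpace ℂ (Fin d)) : evnorm (⇑v) = ‖v‖ := rfl

end Helpers
section Helpers2
variable {d : ℕ}

lemma eigenvalues_le_matNorm (A : Matrix (Fin d) (Fin d) ℂ) (hA : A.IsHermitian) (i : Fin d) :
    hA.eigenvalues i ≤ matNorm A := by
  have hb : ‖hA.eigenvectorBasis i‖ = 1 := hA.eigenvectorBasis.orthonormal.1 i
  have h1 : evnorm (A.mulVec ⇑(hA.eigenvectorBasis i)) ≤ matNorm A * evnorm ⇑(hA.eigenvectorBasis i) :=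
    evnorm_mulVec_le _ _
  rw [hA.mulVec_eigenvectorBasis] at h1
  have h2 : evnorm (hA.eigenvalues i • ⇑(hA.eigenvectorBasis i)) =
      |hA.eigenvalues i| * ‖hA.eigenvectorBasis i‖ := by
    rw [← evnorm_coe]
    show evnorm _ = _
    unfold evnorm
    rw [show (WithLp.equiv 2 (Fin d → ℂ)).symm (hA.eigenvalues i • ⇑(hA.eigenvectorBasis i)) =
      hA.eigenvalues i • (WithLp.equiv 2 (Fin d → ℂ)).symm ⇑(hA.eigenvectorBasis i) from rfl]
    rw [norm_smul, Real.norm_eq_abs]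
  rw [h2, hb, mul_one] at h1
  rw [evnorm_coe, hb, mul_one] at h1
  exact (le_abs_self _).trans h1

lemma mpow_eq (A : Matrix (Fin d) (Fin d) ℂ) (hA : A.IsHermitian) (α : ℝ) :
    mpow A α = (hA.eigenvectorUnitary : Matrix (Fin d) (Fin d) ℂ) *
      Matrix.diagonal (fun i => ((hA.eigenvalues i ^ α : ℝ) : ℂ)) *
      (star (hA.eigenvectorUnitary : Matrix (Fin d) (Fin d) ℂ)) := dif_pos hA

lemma mpow_mul_mpow (A : Matrix (Fin d) (Fin d) ℂ) (hA : A.PosSemidef) {β γ : ℝ}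
    (hβ : 0 < β) (hγ : 0 < γ) :
    mpow A β * mpow A γ = mpow A (β + γ) := by
  have hH := hA.isHermitian
  rw [mpow_eq A hH, mpow_eq A hH, mpow_eq A hH]
  have hU : (star (hH.eigenvectorUnitary : Matrix (Fin d) (Fin d) ℂ)) *
      (hH.eigenvectorUnitary : Matrix (Fin d) (Fin d) ℂ) = 1 :=
    Unitary.coe_star_mul_self _
  have : ∀ (c e : Fin d → ℂ),
      ((hH.eigenvectorUnitary : Matrix (Fin d) (Fin d) ℂ) * Matrix.diagonal c *
        (star (hH.eigenvectorUnitary : Matrix (Fin d) (Fin d) ℂ))) *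
      ((hH.eigenvectorUnitary : Matrix (Fin d) (Fin d) ℂ) * Matrix.diagonal e *
        (star (hH.eigenvectorUnitary : Matrix (Fin d) (Fin d) ℂ))) =
      (hH.eigenvectorUnitary : Matrix (Fin d) (Fin d) ℂ) * (Matrix.diagonal c * Matrix.diagonal e) *
        (star (hH.eigenvectorUnitary : Matrix (Fin d) (Fin d) ℂ)) := by
    intro c e
    calc _ = (hH.eigenvectorUnitary : Matrix (Fin d) (Fin d) ℂ) * (Matrix.diagonal c *
          ((star (hH.eigenvectorUnitary : Matrix (Fin d) (Fin d) ℂ)) *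
            (hH.eigenvectorUnitary : Matrix (Fin d) (Fin d) ℂ)) * Matrix.diagonal e) *
        (star (hH.eigenvectorUnitary : Matrix (Fin d) (Fin d) ℂ)) := by
          simp only [Matrix.mul_assoc]
      _ = _ := by simp only [hU, Matrix.mul_one, Matrix.mul_assoc]
  rw [this, Matrix.diagonal_mul_diagonal]
  have hfun : (fun i => ((hH.eigenvalues i ^ β : ℝ) : ℂ) * ((hH.eigenvalues i ^ γ : ℝ) : ℂ)) =
      fun i => ((hH.eigenvalues i ^ (β + γ) : ℝ) : ℂ) := by
    funext i
    have h0 := hA.eigenvalues_nonneg i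
    rw [← Complex.ofReal_mul, ← Real.rpow_add' h0 (by positivity)]
  rw [hfun]

lemma matNorm_unitary_le (U : Matrix (Fin d) (Fin d) ℂ) (hU : U ∈ Matrix.unitaryGroup (Fin d) ℂ) :
    matNorm U ≤ 1 := by
  set u := Matrix.toEuclideanCLM (𝕜 := ℂ) U with hu
  have h1 : star u = Matrix.toEuclideanCLM (𝕜 := ℂ) (star U) := (map_star _ U).symm
  have hstar : star u * u = 1 := by
    rw [h1, hu, ← _root_.map_mul, hU.1, _root_.map_one]
  have hsq : ‖u‖ * ‖u‖ = ‖star u * u‖ := (CStarRing.norm_star_mul_self).symm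
  rw [hstar] at hsq
  have hn : matNorm U = ‖u‖ := rfl
  rw [hn]
  have hone : ‖(1 : EuclideanSpace ℂ (Fin d) →L[ℂ] EuclideanSpace ℂ (Fin d))‖ ≤ 1 :=
    ContinuousLinearMap.norm_id_le
  nlinarith [norm_nonneg u, hsq, hone]

lemma matNorm_diagonal_le (c : Fin d → ℂ) {M : ℝ} (hM : 0 ≤ M) (hc : ∀ i, ‖c i‖ ≤ M) :
    matNorm (Matrix.diagonal c) ≤ M := by
  apply ContinuousLinearMap.opNorm_le_bound _ hM
  intro x
  have hx : x = (WithLp.equiv 2 (Fin d → ℂ)).symm ((WithLp.equiv 2 (Fin d → ℂ)) x) := rfl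
  rw [hx, aux_mulVec_eq]
  set y := (WithLp.equiv 2 (Fin d → ℂ)) x with hy
  rw [EuclideanSpace.norm_eq, EuclideanSpace.norm_eq]
  have hent : ∀ i, ((WithLp.equiv 2 (Fin d → ℂ)).symm ((Matrix.diagonal c).mulVec y)) i
      = c i * y i := fun i => Matrix.mulVec_diagonal c y i
  calc Real.sqrt (∑ i, ‖((WithLp.equiv 2 (Fin d → ℂ)).symm ((Matrix.diagonal c).mulVec y)) i‖ ^ 2)
      = Real.sqrt (∑ i, ‖c i * y i‖ ^ 2) := by simp_rw [hent]
    _ ≤ Real.sqrt (∑ i, M ^ 2 * ‖y i‖ ^ 2) := by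
        apply Real.sqrt_le_sqrt
        apply Finset.sum_le_sum
        intro i _
        rw [norm_mul, mul_pow]
        apply mul_le_mul_of_nonneg_right _ (by positivity)
        exact pow_le_pow_left₀ (norm_nonneg _) (hc i) 2
    _ = M * Real.sqrt (∑ i, ‖y i‖ ^ 2) := by
        rw [← Finset.mul_sum, Real.sqrt_mul (by positivity), Real.sqrt_sq hM]
    _ = M * Real.sqrt (∑ i, ‖((WithLp.equiv 2 (Fin d → ℂ)).symm y) i‖ ^ 2) := rfl

end Helpers2
section Helpers3
variable {d : ℕ}

lemma matNorm_mul_le (A B : Matrix (Fin d) (Fin d) ℂ) :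
    matNorm (A * B) ≤ matNorm A * matNorm B := by
  unfold matNorm
  rw [_root_.map_mul]
  exact norm_mul_le _ _

lemma matNorm_mpow_le (A : Matrix (Fin d) (Fin d) ℂ) (hA : A.PosSemidef) {α : ℝ}
    (hα : 0 ≤ α) : matNorm (mpow A α) ≤ matNorm A ^ α := by
  have hH := hA.isHermitian
  rw [mpow_eq A hH]
  have hMn : 0 ≤ matNorm A ^ α := Real.rpow_nonneg (matNorm_nonneg A) α
  calc matNorm _ ≤ matNorm (hH.eigenvectorUnitary : Matrix (Fin d) (Fin d) ℂ) *
        matNorm (Matrix.diagonal (fun i => ((hH.eigenvalues i ^ α : ℝ) : ℂ)) *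
          (star (hH.eigenvectorUnitary : Matrix (Fin d) (Fin d) ℂ))) := by
        rw [Matrix.mul_assoc]; exact matNorm_mul_le _ _
    _ ≤ 1 * (matNorm (Matrix.diagonal (fun i => ((hH.eigenvalues i ^ α : ℝ) : ℂ))) *
        matNorm (star (hH.eigenvectorUnitary : Matrix (Fin d) (Fin d) ℂ))) := by
        apply mul_le_mul (matNorm_unitary_le _ (hH.eigenvectorUnitary).2) (matNorm_mul_le _ _)
          (matNorm_nonneg _) zero_le_one
    _ ≤ 1 * (matNorm A ^ α * 1) := by
        rw [one_mul, one_mul]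
        apply mul_le_mul _ _ (matNorm_nonneg _) hMn
        · apply matNorm_diagonal_le _ hMn
          intro i
          rw [Complex.norm_real, Real.norm_eq_abs, abs_of_nonneg
            (Real.rpow_nonneg (hA.eigenvalues_nonneg i) α)]
          exact Real.rpow_le_rpow (hA.eigenvalues_nonneg i) (eigenvalues_le_matNorm A hH i) hα
        · exact matNorm_unitary_le _ (Unitary.star_mem (hH.eigenvectorUnitary).2)
    _ = matNorm A ^ α := by ring

lemma evnorm_mpow_mulVec_le (A : Matrix (Fin d) (Fin d) ℂ) (hA : A.PosSemidef) {γ : ℝ}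
    (hγ : 0 ≤ γ) (v : Fin d → ℂ) :
    evnorm ((mpow A γ).mulVec v) ≤ matNorm A ^ γ * evnorm v :=
  (evnorm_mulVec_le _ _).trans (mul_le_mul_of_nonneg_right (matNorm_mpow_le A hA hγ)
    (evnorm_nonneg _))

lemma evnorm_mpow_split (A : Matrix (Fin d) (Fin d) ℂ) (hA : A.PosSemidef) {β γ : ℝ}
    (hβ : 0 < β) (hγ : 0 < γ) (v : Fin d → ℂ) :
    evnorm ((mpow A (β + γ)).mulVec v) ≤ matNorm A ^ β * evnorm ((mpow A γ).mulVec v) := by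
  rw [← mpow_mul_mpow A hA hβ hγ, ← Matrix.mulVec_mulVec]
  exact (evnorm_mulVec_le _ _).trans (mul_le_mul_of_nonneg_right
    (matNorm_mpow_le A hA hβ.le) (evnorm_nonneg _))

lemma matNorm_le_sum_entries (A : Matrix (Fin d) (Fin d) ℂ) :
    matNorm A ≤ ∑ i, ∑ j, ‖A i j‖ := by
  apply ContinuousLinearMap.opNorm_le_bound _ (by positivity)
  intro x
  have hx : x = (WithLp.equiv 2 (Fin d → ℂ)).symm ((WithLp.equiv 2 (Fin d → ℂ)) x) := rfl
  rw [hx, aux_mulVec_eq]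
  set y := (WithLp.equiv 2 (Fin d → ℂ)) x with hy
  have hcoord : ∀ j, ‖y j‖ ≤ ‖x‖ := by
    intro j
    have h1 : ‖y j‖ ^ 2 ≤ ∑ i, ‖y i‖ ^ 2 :=
      Finset.single_le_sum (f := fun i => ‖y i‖ ^ 2) (fun i _ => by positivity) (Finset.mem_univ j)
    have h2 : ‖x‖ = Real.sqrt (∑ i, ‖y i‖ ^ 2) := EuclideanSpace.norm_eq x
    rw [h2]
    calc ‖y j‖ = Real.sqrt (‖y j‖ ^ 2) := (Real.sqrt_sq (norm_nonneg _)).symm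
      _ ≤ _ := Real.sqrt_le_sqrt h1
  calc ‖(WithLp.equiv 2 (Fin d → ℂ)).symm (A.mulVec y)‖
      = Real.sqrt (∑ i, ‖A.mulVec y i‖ ^ 2) := EuclideanSpace.norm_eq _
    _ ≤ ∑ i, ‖A.mulVec y i‖ := by
        have h3 : (∑ i, ‖A.mulVec y i‖ ^ 2) ≤ (∑ i, ‖A.mulVec y i‖) ^ 2 :=
          Finset.sum_sq_le_sq_sum_of_nonneg (fun i _ => norm_nonneg _)
        calc Real.sqrt (∑ i, ‖A.mulVec y i‖ ^ 2) ≤ Real.sqrt ((∑ i, ‖A.mulVec y i‖) ^ 2) :=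
            Real.sqrt_le_sqrt h3
          _ = _ := Real.sqrt_sq (by positivity)
    _ ≤ ∑ i, ∑ j, ‖A i j‖ * ‖x‖ := by
        apply Finset.sum_le_sum
        intro i _
        calc ‖A.mulVec y i‖ = ‖∑ j, A i j * y j‖ := rfl
          _ ≤ ∑ j, ‖A i j * y j‖ := norm_sum_le _ _
          _ ≤ ∑ j, ‖A i j‖ * ‖x‖ := by
              apply Finset.sum_le_sum
              intro j _
              rw [norm_mul]
              exact mul_le_mul_of_nonneg_left (hcoord j) (norm_nonneg _)
    _ = (∑ i, ∑ j, ‖A i j‖) * ‖x‖ := by rw [Finset.sum_mul]; congr 1; funext i; rw [Finset.sum_mul]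

lemma continuous_matNorm : Continuous (matNorm (d := d)) := by
  let L : Matrix (Fin d) (Fin d) ℂ →ₗ[ℂ]
      (EuclideanSpace ℂ (Fin d) →L[ℂ] EuclideanSpace ℂ (Fin d)) :=
    { toFun := fun A => Matrix.toEuclideanCLM (𝕜 := ℂ) A,
      map_add' := fun a b => map_add _ a b,
      map_smul' := fun c a => map_smul _ c a }
  exact (L.continuous_of_finiteDimensional).norm

lemma rpow_mul_rpow_neg_le_one (x : ℝ≥0∞) (a : ℝ) : x ^ a * x ^ (-a) ≤ 1 := by
  rcases eq_or_ne x 0 with rfl | hx0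
  · rcases lt_trichotomy a 0 with h | h | h
    · rw [ENNReal.zero_rpow_of_neg h, ENNReal.zero_rpow_of_pos (by linarith), mul_zero]
      exact zero_le_one
    · subst h; simp
    · rw [ENNReal.zero_rpow_of_pos h, zero_mul]; exact zero_le_one
  rcases eq_or_ne x ∞ with rfl | hxt
  · rcases lt_trichotomy a 0 with h | h | h
    · rw [ENNReal.top_rpow_of_neg h, zero_mul]; exact zero_le_one
    · subst h; simp
    · rw [ENNReal.top_rpow_of_pos h, ENNReal.top_rpow_of_neg (by linarith), mul_zero]
      exact zero_le_one
  · rw [← ENNReal.rpow_add _ _ hx0 hxt, add_neg_cancel, ENNReal.rpow_zero]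

end Helpers3
section Helpers4

open scoped BigOperators

lemma holder_one_sided {α : Type*} [MeasurableSpace α] (μ : MeasureTheory.Measure α)
    {r q : ℝ} (hrq : r.HolderConjugate q) {F G H : α → ℝ≥0∞}
    (hF : AEMeasurable F μ) (hFtop : ∀ x, F x ≠ ∞) (hH : ∀ x, H x ≤ F x * G x) :
    ∫⁻ x, H x ∂μ ≤ (∫⁻ x, F x ^ r ∂μ) ^ (1 / r) * (∫⁻ x, G x ^ q ∂μ) ^ (1 / q) := by
  obtain ⟨h, hmeas, hle, heq⟩ := MeasureTheory.exists_measurable_le_lintegral_eq μ H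
  rw [heq]
  set G' : α → ℝ≥0∞ := fun x => (F x)⁻¹ * h x with hG'
  have hhle : ∀ x, h x ≤ F x * G' x := by
    intro x
    rcases eq_or_ne (F x) 0 with h0 | h0
    · have : h x = 0 := le_antisymm (by simpa [h0] using (hle x).trans (hH x)) zero_le
      simp [hG', this, h0]
    · rw [hG', ← mul_assoc, ENNReal.mul_inv_cancel h0 (hFtop x), one_mul]
  have hG'le : ∀ x, G' x ≤ G x := by
    intro x
    rcases eq_or_ne (F x) 0 with h0 | h0
    · have : h x = 0 := le_antisymm (by simpa [h0] using (hle x).trans (hH x)) zero_le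
      simp [hG', this]
    · calc G' x ≤ (F x)⁻¹ * (F x * G x) :=
          mul_le_mul_right ((hle x).trans (hH x)) _
        _ = G x := by rw [← mul_assoc, ENNReal.inv_mul_cancel h0 (hFtop x), one_mul]
  calc ∫⁻ x, h x ∂μ ≤ ∫⁻ x, F x * G' x ∂μ := MeasureTheory.lintegral_mono hhle
    _ = ∫⁻ x, ((fun x => F x) * fun x => G' x) x ∂μ := rfl
    _ ≤ (∫⁻ x, F x ^ r ∂μ) ^ (1 / r) * (∫⁻ x, G' x ^ q ∂μ) ^ (1 / q) :=
        ENNReal.lintegral_mul_le_Lp_mul_Lq μ hrq hF (hF.inv.mul hmeas.aemeasurable)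
    _ ≤ (∫⁻ x, F x ^ r ∂μ) ^ (1 / r) * (∫⁻ x, G x ^ q ∂μ) ^ (1 / q) := by
        apply mul_le_mul_right
        apply ENNReal.rpow_le_rpow _ (le_of_lt (by have := hrq.symm.left_pos; positivity))
        exact MeasureTheory.lintegral_mono fun x => ENNReal.rpow_le_rpow (hG'le x) hrq.symm.left_pos.le

lemma lintegral_biUnion_finset_le {α ι : Type*} [MeasurableSpace α]
    (μ : MeasureTheory.Measure α) (f : α → ℝ≥0∞) (S : Finset ι) (t : ι → Set α) :
    ∫⁻ x in ⋃ k ∈ S, t k, f x ∂μ ≤ ∑ k ∈ S, ∫⁻ x in t k, f x ∂μ := by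
  classical
  induction S using Finset.induction_on with
  | empty => simp
  | insert a s hnot ih =>
    rw [Finset.set_biUnion_insert, Finset.sum_insert hnot]
    exact (MeasureTheory.lintegral_union_le _ _ _).trans (add_le_add_right ih _)

end Helpers4
section Helpers5
variable {n d : ℕ}

lemma aemeasurable_ofReal_matNorm (W : (Fin n → ℝ) → Matrix (Fin d) (Fin d) ℂ)
    (hW : IsMatrixWeight W) :
    AEMeasurable (fun x => ENNReal.ofReal (matNorm (W x))) (volume : Measure (Fin n → ℝ)) := by
  have h : ∀ i j, AEMeasurable (fun x => W x i j) (volume : Measure (Fin n → ℝ)) :=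
    fun i j => ((hW.locInt i j).aestronglyMeasurable).aemeasurable
  have hWm : AEMeasurable (fun x => (fun i j => W x i j : Fin d → Fin d → ℂ))
      (volume : Measure (Fin n → ℝ)) := by
    refine ⟨fun x i j => (h i j).mk _ x,
      measurable_pi_iff.2 fun i => measurable_pi_iff.2 fun j => (h i j).measurable_mk, ?_⟩
    have hae : ∀ᵐ x ∂(volume : Measure (Fin n → ℝ)), ∀ i j, W x i j = (h i j).mk _ x := by
      rw [MeasureTheory.ae_all_iff]
      intro i
      rw [MeasureTheory.ae_all_iff]
      exact fun j => (h i j).ae_eq_mk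
    filter_upwards [hae] with x hx
    funext i j
    exact hx i j
  have hcont : Continuous (fun M : (Fin d → Fin d → ℂ) =>
      ENNReal.ofReal (matNorm (Matrix.of M))) :=
    ENNReal.continuous_ofReal.comp continuous_matNorm
  exact hcont.measurable.comp_aemeasurable hWm

/-- The key Hölder estimate on an arbitrary set. -/
lemma key_I_le (W : (Fin n → ℝ) → Matrix (Fin d) (Fin d) ℂ) (hW : IsMatrixWeight W)
    {p t : ℝ} (hp : 0 < p) (hpt : p < t) (f : (Fin n → ℝ) → Fin d → ℂ)
    (Q : Set (Fin n → ℝ)) :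
    (∫⁻ y in Q, ENNReal.ofReal (evnorm ((mpow (W y) (1 / p)).mulVec (f y)) ^ p)) ≤
      (cubeWeight W Q) ^ (1 - p / t) *
        (∫⁻ y in Q, ENNReal.ofReal (evnorm ((mpow (W y) (1 / t)).mulVec (f y)) ^ t)) ^ (p / t) := by
  have ht : 0 < t := hp.trans hpt
  set F : (Fin n → ℝ) → ℝ≥0∞ := fun y => (ENNReal.ofReal (matNorm (W y))) ^ (1 - p / t) with hF
  set G : (Fin n → ℝ) → ℝ≥0∞ :=
    fun y => ENNReal.ofReal (evnorm ((mpow (W y) (1 / t)).mulVec (f y)) ^ t) with hG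
  set G2 : (Fin n → ℝ) → ℝ≥0∞ := fun y => (G y) ^ (p / t) with hG2
  have hpt1 : p / t < 1 := (div_lt_one ht).2 hpt
  have hpt0 : 0 ≤ p / t := by positivity
  -- pointwise bound
  have hpoint : ∀ y, ENNReal.ofReal (evnorm ((mpow (W y) (1 / p)).mulVec (f y)) ^ p)
      ≤ F y * G2 y := by
    intro y
    set m := matNorm (W y) with hm
    have hm0 : 0 ≤ m := matNorm_nonneg _
    set et := evnorm ((mpow (W y) (1 / t)).mulVec (f y)) with het
    have het0 : 0 ≤ et := evnorm_nonneg _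
    have hβ : (0:ℝ) < 1 / p - 1 / t := by
      rw [sub_pos]
      exact one_div_lt_one_div_of_lt hp hpt
    have hsplit : evnorm ((mpow (W y) (1 / p)).mulVec (f y)) ≤ m ^ (1 / p - 1 / t) * et := by
      have h := evnorm_mpow_split (W y) (hW.posSemidef y) hβ
        (by positivity : (0:ℝ) < 1 / t) (f y)
      rwa [sub_add_cancel] at h
    have hreal : evnorm ((mpow (W y) (1 / p)).mulVec (f y)) ^ p ≤
        m ^ (1 - p / t) * (et ^ t) ^ (p / t) := by
      calc evnorm ((mpow (W y) (1 / p)).mulVec (f y)) ^ p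
          ≤ (m ^ (1 / p - 1 / t) * et) ^ p :=
            Real.rpow_le_rpow (evnorm_nonneg _) hsplit hp.le
        _ = (m ^ (1 / p - 1 / t)) ^ p * et ^ p :=
            Real.mul_rpow (Real.rpow_nonneg hm0 _) het0
        _ = m ^ (1 - p / t) * (et ^ t) ^ (p / t) := by
            rw [← Real.rpow_mul hm0, ← Real.rpow_mul het0]
            congr 1
            · congr 1
              field_simp
            · congr 1
              field_simp
    calc ENNReal.ofReal (evnorm ((mpow (W y) (1 / p)).mulVec (f y)) ^ p)
        ≤ ENNReal.ofReal (m ^ (1 - p / t) * (et ^ t) ^ (p / t)) := ENNReal.ofReal_le_ofReal hreal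
      _ = ENNReal.ofReal (m ^ (1 - p / t)) * ENNReal.ofReal ((et ^ t) ^ (p / t)) :=
          ENNReal.ofReal_mul (Real.rpow_nonneg hm0 _)
      _ = F y * G2 y := by
          simp only [hF, hG2, hG, hm, het]
          rw [ENNReal.ofReal_rpow_of_nonneg (matNorm_nonneg _) (by linarith),
            ENNReal.ofReal_rpow_of_nonneg (Real.rpow_nonneg (evnorm_nonneg _) _) hpt0]
  -- Hölder
  have hrq : Real.HolderConjugate (t / (t - p)) (t / p) := by
    rw [Real.holderConjugate_iff]
    constructor
    · rw [lt_div_iff₀ (by linarith)]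
      linarith
    · rw [inv_div, inv_div]
      field_simp
      ring
  have hFm : AEMeasurable F (volume.restrict Q) :=
    ENNReal.continuous_rpow_const.measurable.comp_aemeasurable
      ((aemeasurable_ofReal_matNorm W hW).restrict)
  have hFtop : ∀ x, F x ≠ ∞ :=
    fun x => ENNReal.rpow_ne_top_of_nonneg (by linarith) ENNReal.ofReal_ne_top
  have hH := holder_one_sided (volume.restrict Q) hrq hFm hFtop hpoint
  have hFr : (∫⁻ x in Q, F x ^ (t / (t - p))) = cubeWeight W Q := by
    unfold cubeWeight
    apply MeasureTheory.lintegral_congr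
    intro x
    rw [hF, ← ENNReal.rpow_mul]
    have htp : t - p ≠ 0 := by linarith
    rw [show (1 - p / t) * (t / (t - p)) = 1 by field_simp]
    exact ENNReal.rpow_one _
  have hGq : (∫⁻ x in Q, G2 x ^ (t / p)) = ∫⁻ x in Q, G x := by
    apply MeasureTheory.lintegral_congr
    intro x
    rw [hG2, ← ENNReal.rpow_mul]
    rw [show (p / t) * (t / p) = 1 by field_simp]
    exact ENNReal.rpow_one _
  have e1 : 1 / (t / (t - p)) = 1 - p / t := by
    rw [one_div_div, sub_div, div_self ht.ne']
  have e2 : 1 / (t / p) = p / t := one_div_div _ _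
  rw [hFr, hGq, e1, e2] at hH
  exact hH
end Helpers5
section Helpers6
variable {n d : ℕ}

lemma cubeWeight_dyadic_lt_top (W : (Fin n → ℝ) → Matrix (Fin d) (Fin d) ℂ)
    (hW : IsMatrixWeight W) (j : ℤ) (k : Fin n → ℤ) :
    cubeWeight W (dyadicCube j k) < ∞ := by
  set Box : Set (Fin n → ℝ) :=
    Set.univ.pi fun i => Set.Icc ((2:ℝ) ^ (-j) * k i) ((2:ℝ) ^ (-j) * (k i + 1)) with hBox
  have hsub : dyadicCube j k ⊆ Box := by
    intro x hx
    rw [hBox, Set.mem_univ_pi]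
    exact fun i => ⟨(hx i).1, ((hx i).2).le⟩
  have hBoxC : IsCompact Box := isCompact_univ_pi fun i => isCompact_Icc
  set g : (Fin n → ℝ) → ℝ := fun y => ∑ i, ∑ j', ‖W y i j'‖ with hg
  have hgint : MeasureTheory.IntegrableOn g Box volume := by
    apply MeasureTheory.integrable_finset_sum
    intro i _
    apply MeasureTheory.integrable_finset_sum
    intro j' _
    exact ((hW.locInt i j').integrableOn_isCompact hBoxC).norm
  calc cubeWeight W (dyadicCube j k)
      ≤ ∫⁻ y in dyadicCube j k, ENNReal.ofReal (g y) :=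
        MeasureTheory.lintegral_mono fun y =>
          ENNReal.ofReal_le_ofReal (matNorm_le_sum_entries _)
    _ ≤ ∫⁻ y in Box, ENNReal.ofReal (g y) := MeasureTheory.lintegral_mono_set hsub
    _ ≤ ∫⁻ y in Box, ‖g y‖ₑ :=
        MeasureTheory.lintegral_mono fun y => Real.ofReal_le_enorm _
    _ < ∞ := hgint.2

lemma integrand_zero_of_cubeWeight_zero (W : (Fin n → ℝ) → Matrix (Fin d) (Fin d) ℂ)
    (hW : IsMatrixWeight W) {p : ℝ} (hp : 0 < p) (f : (Fin n → ℝ) → Fin d → ℂ)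
    (Q : Set (Fin n → ℝ)) (h0 : cubeWeight W Q = 0) :
    (∫⁻ y in Q, ENNReal.ofReal (evnorm ((mpow (W y) (1 / p)).mulVec (f y)) ^ p)) = 0 := by
  have hm := (aemeasurable_ofReal_matNorm W hW).restrict (s := Q)
  rw [cubeWeight, MeasureTheory.lintegral_eq_zero_iff' hm] at h0
  rw [← MeasureTheory.lintegral_zero]
  apply MeasureTheory.lintegral_congr_ae
  filter_upwards [h0] with y hy
  have hmy : matNorm (W y) = 0 := by
    have := ENNReal.ofReal_eq_zero.1 hy
    exact le_antisymm this (matNorm_nonneg _)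
  have hev : evnorm ((mpow (W y) (1 / p)).mulVec (f y)) = 0 := by
    have hle := evnorm_mpow_mulVec_le (W y) (hW.posSemidef y)
      (by positivity : (0:ℝ) ≤ 1 / p) (f y)
    rw [hmy, Real.zero_rpow (by positivity : (1:ℝ)/p ≠ 0), zero_mul] at hle
    exact le_antisymm hle (evnorm_nonneg _)
  rw [hev, Real.zero_rpow hp.ne', ENNReal.ofReal_zero]

end Helpers6

/-- `L^t(W) ↪ M_p^{t,∞}(W) ↪ L^p_loc(W)` for `0 < p ≤ t < ∞`. -/
theorem stmt6 {n d : ℕ} (W : (Fin n → ℝ) → Matrix (Fin d) (Fin d) ℂ)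
    (hW : IsMatrixWeight W) (p t : ℝ) (hp : 0 < p) (hpt : p ≤ t) :
    (∃ C : ℝ≥0∞, C ≠ ∞ ∧ ∀ f : (Fin n → ℝ) → Fin d → ℂ,
      BMnorm W p t ∞ f ≤ C *
        (∫⁻ x, ENNReal.ofReal (evnorm ((mpow (W x) (1 / t)).mulVec (f x)) ^ t)) ^ (1 / t)) ∧
    (∀ K : Set (Fin n → ℝ), IsCompact K → ∃ C : ℝ≥0∞, C ≠ ∞ ∧ ∀ f : (Fin n → ℝ) → Fin d → ℂ,
      locLpNorm W p f K ≤ C * BMnorm W p t ∞ f) := by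
  have ht : 0 < t := lt_of_lt_of_le hp hpt
  constructor
  · -- Part 1 : L^t(W) ↪ M_p^{t,∞}(W)
    refine ⟨1, one_ne_top, ?_⟩
    intro f
    rw [BMnorm, if_pos rfl, one_mul]
    apply iSup_le
    rintro ⟨j, k⟩
    rcases eq_or_lt_of_le hpt with rfl | hlt
    · -- p = t
      unfold BMterm
      rw [sub_self, ENNReal.rpow_zero, one_mul]
      exact ENNReal.rpow_le_rpow
        (MeasureTheory.setLIntegral_le_lintegral _ _) (by positivity)
    · -- p < t
      have hkey := key_I_le W hW hp hlt f (dyadicCube j k)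
      set Q := dyadicCube j k with hQ
      set WQ := cubeWeight W Q with hWQ
      set S := ∫⁻ x, ENNReal.ofReal (evnorm ((mpow (W x) (1 / t)).mulVec (f x)) ^ t) with hS
      have hE : (∫⁻ y in Q, ENNReal.ofReal (evnorm ((mpow (W y) (1 / t)).mulVec (f y)) ^ t)) ≤ S :=
        MeasureTheory.setLIntegral_le_lintegral _ _
      have h1 : (∫⁻ y in Q, ENNReal.ofReal (evnorm ((mpow (W y) (1 / p)).mulVec (f y)) ^ p))
          ^ (1 / p) ≤ WQ ^ (1 / p - 1 / t) * S ^ (1 / t) := by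
        calc (∫⁻ y in Q, ENNReal.ofReal (evnorm ((mpow (W y) (1 / p)).mulVec (f y)) ^ p)) ^ (1/p)
            ≤ (WQ ^ (1 - p / t) * S ^ (p / t)) ^ (1 / p) := by
              apply ENNReal.rpow_le_rpow _ (by positivity)
              exact hkey.trans (mul_le_mul_right (ENNReal.rpow_le_rpow hE (by positivity)) _)
          _ = (WQ ^ (1 - p / t)) ^ (1 / p) * (S ^ (p / t)) ^ (1 / p) :=
              ENNReal.mul_rpow_of_nonneg _ _ (by positivity)
          _ = WQ ^ (1 / p - 1 / t) * S ^ (1 / t) := by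
              rw [← ENNReal.rpow_mul, ← ENNReal.rpow_mul]
              congr 2
              · field_simp
              · field_simp
      unfold BMterm
      calc WQ ^ (1 / t - 1 / p) *
            (∫⁻ y in Q, ENNReal.ofReal (evnorm ((mpow (W y) (1 / p)).mulVec (f y)) ^ p)) ^ (1 / p)
          ≤ WQ ^ (1 / t - 1 / p) * (WQ ^ (1 / p - 1 / t) * S ^ (1 / t)) := mul_le_mul_right h1 _
        _ = (WQ ^ (1 / t - 1 / p) * WQ ^ (-(1 / t - 1 / p))) * S ^ (1 / t) := by
            rw [show (1:ℝ) / p - 1 / t = -(1 / t - 1 / p) by ring, mul_assoc]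
        _ ≤ 1 * S ^ (1 / t) := mul_le_mul_left (rpow_mul_rpow_neg_le_one WQ _) _
        _ = S ^ (1 / t) := one_mul _
  · -- Part 2 : M_p^{t,∞}(W) ↪ L^p_loc(W)
    intro K hK
    obtain ⟨R, hR⟩ := (Metric.isBounded_iff_subset_closedBall 0).1 hK.isBounded
    set R' : ℝ := max R 0 with hR'
    set M : ℤ := ⌈R'⌉ with hM
    set S : Finset (Fin n → ℤ) := Finset.Icc (fun _ => -M - 1) (fun _ => M + 1) with hSdef
    have hcover : K ⊆ ⋃ k ∈ S, dyadicCube 0 k := by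
      intro x hx
      have hxR : ∀ i, |x i| ≤ R' := by
        intro i
        have h1 : dist x 0 ≤ R := Metric.mem_closedBall.mp (hR hx)
        rw [dist_zero_right] at h1
        calc |x i| = ‖x i‖ := (Real.norm_eq_abs _).symm
          _ ≤ ‖x‖ := norm_le_pi_norm x i
          _ ≤ R' := h1.trans (le_max_left _ _)
      refine Set.mem_biUnion (?_ : (fun i => ⌊x i⌋) ∈ S) ?_
      · rw [hSdef, Finset.mem_Icc]
        constructor <;> intro i
        · have h4 := Int.sub_one_lt_floor (x i)
          have h5 := Int.le_ceil R'
          have h3 := (abs_le.1 (hxR i)).1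
          have : (-(M:ℝ) - 1) ≤ (⌊x i⌋ : ℝ) := by
            rw [hM]
            push_cast
            linarith
          exact_mod_cast this
        · have h4 := Int.floor_le (x i)
          have h5 := Int.le_ceil R'
          have h3 := (abs_le.1 (hxR i)).2
          have : ((⌊x i⌋ : ℝ)) ≤ (M:ℝ) + 1 := by
            rw [hM]
            push_cast
            linarith
          exact_mod_cast this
      · intro i
        rw [neg_zero, zpow_zero, one_mul, one_mul]
        exact ⟨Int.floor_le _, by exact_mod_cast Int.lt_floor_add_one (x i)⟩
    have hexp : (0:ℝ) ≤ (1 / p - 1 / t) * p := by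
      have : 1 / t ≤ 1 / p := one_div_le_one_div_of_le hp hpt
      have h0 : (0:ℝ) ≤ 1 / p - 1 / t := by linarith
      positivity
    set C : ℝ≥0∞ :=
      (∑ k ∈ S, (cubeWeight W (dyadicCube 0 k)) ^ ((1 / p - 1 / t) * p)) ^ (1 / p) with hC
    have hCne : C ≠ ∞ := by
      rw [hC]
      apply ENNReal.rpow_ne_top_of_nonneg (by positivity)
      exact (ENNReal.sum_lt_top.mpr fun k _ =>
        ENNReal.rpow_lt_top_of_nonneg hexp (cubeWeight_dyadic_lt_top W hW 0 k).ne).ne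
    refine ⟨C, hCne, ?_⟩
    intro f
    set B := BMnorm W p t ∞ f with hB
    have hterm : ∀ k : Fin n → ℤ, BMterm W p t f 0 k ≤ B := by
      intro k
      rw [hB, BMnorm, if_pos rfl]
      exact le_iSup (fun jk : ℤ × (Fin n → ℤ) => BMterm W p t f jk.1 jk.2) ((0 : ℤ), k)
    have hIk : ∀ k ∈ S, (∫⁻ y in dyadicCube 0 k,
        ENNReal.ofReal (evnorm ((mpow (W y) (1 / p)).mulVec (f y)) ^ p)) ≤
        (cubeWeight W (dyadicCube 0 k)) ^ ((1 / p - 1 / t) * p) * B ^ p := by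
      intro k _
      set Q := dyadicCube 0 k with hQ
      set WQ := cubeWeight W Q with hWQ
      set I := ∫⁻ y in Q, ENNReal.ofReal (evnorm ((mpow (W y) (1 / p)).mulVec (f y)) ^ p) with hI
      rcases eq_or_ne WQ 0 with h0 | h0
      · rw [hI, integrand_zero_of_cubeWeight_zero W hW hp f Q h0]
        exact zero_le
      · have hWQtop : WQ ≠ ∞ := (cubeWeight_dyadic_lt_top W hW 0 k).ne
        have h1 : WQ ^ (1 / t - 1 / p) ≠ 0 := by
          simp [ENNReal.rpow_eq_zero_iff, h0, hWQtop]
        have h2 : WQ ^ (1 / t - 1 / p) ≠ ∞ := by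
          simp [ENNReal.rpow_eq_top_iff, h0, hWQtop]
        have hBM : WQ ^ (1 / t - 1 / p) * I ^ (1 / p) ≤ B := hterm k
        have h3 : I ^ (1 / p) ≤ WQ ^ (1 / p - 1 / t) * B := by
          have h4 := mul_le_mul_right hBM (WQ ^ (1 / t - 1 / p))⁻¹
          rw [← mul_assoc, ENNReal.inv_mul_cancel h1 h2, one_mul] at h4
          rwa [show WQ ^ ((1:ℝ) / p - 1 / t) = (WQ ^ ((1:ℝ) / t - 1 / p))⁻¹ by
            rw [show (1:ℝ) / p - 1 / t = -(1 / t - 1 / p) by ring, ENNReal.rpow_neg]]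
        have h5 : I = (I ^ (1 / p)) ^ p := by
          rw [← ENNReal.rpow_mul, one_div_mul_cancel hp.ne', ENNReal.rpow_one]
        rw [h5]
        calc (I ^ (1 / p)) ^ p ≤ (WQ ^ (1 / p - 1 / t) * B) ^ p :=
            ENNReal.rpow_le_rpow h3 hp.le
          _ = WQ ^ ((1 / p - 1 / t) * p) * B ^ p := by
              rw [ENNReal.mul_rpow_of_nonneg _ _ hp.le, ← ENNReal.rpow_mul]
    rw [locLpNorm]
    calc (∫⁻ x in K, ENNReal.ofReal (evnorm ((mpow (W x) (1 / p)).mulVec (f x)) ^ p)) ^ (1 / p)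
        ≤ (∫⁻ x in ⋃ k ∈ S, dyadicCube 0 k,
            ENNReal.ofReal (evnorm ((mpow (W x) (1 / p)).mulVec (f x)) ^ p)) ^ (1 / p) :=
          ENNReal.rpow_le_rpow (MeasureTheory.lintegral_mono_set hcover) (by positivity)
      _ ≤ (∑ k ∈ S, ∫⁻ x in dyadicCube 0 k,
            ENNReal.ofReal (evnorm ((mpow (W x) (1 / p)).mulVec (f x)) ^ p)) ^ (1 / p) :=
          ENNReal.rpow_le_rpow (lintegral_biUnion_finset_le _ _ _ _) (by positivity)
      _ ≤ ((∑ k ∈ S, (cubeWeight W (dyadicCube 0 k)) ^ ((1 / p - 1 / t) * p)) * B ^ p)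
            ^ (1 / p) := by
          apply ENNReal.rpow_le_rpow _ (by positivity)
          rw [Finset.sum_mul]
          exact Finset.sum_le_sum hIk
      _ = C * B := by
          rw [ENNReal.mul_rpow_of_nonneg _ _ (by positivity : (0:ℝ) ≤ 1 / p), ← hC,
            ← ENNReal.rpow_mul, mul_one_div_cancel hp.ne', ENNReal.rpow_one]
end
end

section
/- Let 0 < p < t < ∞ and f(x) = |x|^{-n/t} on ℝⁿ. Then f belongs to the unweighted Bourgain-Morrey space M_p^{t,∞} with ‖f‖_{M_p^{t,∞}} ≈ 1, and there is a constant c > 0 such that for every j ∈ ℕ, ‖f − χ_{B(0,2^j)} f‖_{M_p^{t,∞}} ≥ c. Consequently the singleton {f}, though totally bounded in M_p^{t,∞}, does not uniformly vanish at infinity. -/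
open MeasureTheory ENNReal Matrix
open scoped ENNReal ComplexOrder

noncomputable section

variable {n d : ℕ}

/-- The unweighted scalar Bourgain-Morrey `M_p^{t,∞}` norm. -/
def BMnormS {n : ℕ} (p t : ℝ) (f : (Fin n → ℝ) → ℝ) : ℝ≥0∞ :=
  ⨆ jk : ℤ × (Fin n → ℤ),
    volume (dyadicCube jk.1 jk.2) ^ (1 / t - 1 / p) *
      (∫⁻ x in dyadicCube jk.1 jk.2, ENNReal.ofReal (|f x| ^ p)) ^ (1 / p)

section aux19

variable {n : ℕ}

lemma ernorm_nonneg (x : Fin n → ℝ) : 0 ≤ ernorm x := norm_nonneg _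

lemma ernorm_eq (x : Fin n → ℝ) : ernorm x = Real.sqrt (∑ i, x i ^ 2) := by
  rw [ernorm, EuclideanSpace.norm_eq]
  congr 1
  refine Finset.sum_congr rfl fun i _ => ?_
  rw [Real.norm_eq_abs, sq_abs]; rfl

lemma abs_coord_le_ernorm (x : Fin n → ℝ) (i : Fin n) : |x i| ≤ ernorm x := by
  rw [ernorm_eq, ← Real.sqrt_sq_eq_abs]
  exact Real.sqrt_le_sqrt (Finset.single_le_sum (fun j _ => sq_nonneg (x j)) (Finset.mem_univ i))

lemma ernorm_le_of_le {x : Fin n → ℝ} {M : ℝ} (hM : 0 ≤ M) (h : ∀ i, |x i| ≤ M) :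
    ernorm x ≤ Real.sqrt n * M := by
  rw [ernorm_eq]
  have h1 : ∑ i, x i ^ 2 ≤ (n : ℝ) * M ^ 2 := by
    calc ∑ i, x i ^ 2 ≤ ∑ _i : Fin n, M ^ 2 :=
          Finset.sum_le_sum fun i _ => by
            rw [← sq_abs]; exact pow_le_pow_left₀ (abs_nonneg _) (h i) 2
      _ = (n : ℝ) * M ^ 2 := by simp [Finset.sum_const, nsmul_eq_mul]
  calc Real.sqrt (∑ i, x i ^ 2) ≤ Real.sqrt ((n : ℝ) * M ^ 2) := Real.sqrt_le_sqrt h1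
    _ = Real.sqrt n * M := by rw [Real.sqrt_mul (Nat.cast_nonneg n), Real.sqrt_sq hM]

lemma ernorm_pos {x : Fin n → ℝ} (hx : x ≠ 0) : 0 < ernorm x := by
  obtain ⟨i, hi⟩ := Function.ne_iff.1 hx
  exact lt_of_lt_of_le (abs_pos.2 hi) (abs_coord_le_ernorm x i)

lemma mem_euclBall {x : Fin n → ℝ} {R : ℝ} : x ∈ euclBall R ↔ ernorm x < R := Iff.rfl

lemma continuous_ernorm : Continuous (ernorm (n := n)) :=
  continuous_norm.comp (PiLp.continuous_toLp 2 fun _ : Fin n => ℝ)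

lemma measurableSet_euclBall (R : ℝ) : MeasurableSet (euclBall (n := n) R) :=
  (isOpen_lt continuous_ernorm continuous_const).measurableSet

lemma dyadicCube_eq (j : ℤ) (k : Fin n → ℤ) :
    dyadicCube j k = Set.pi Set.univ
      (fun i => Set.Ico ((2:ℝ) ^ (-j) * k i) ((2:ℝ) ^ (-j) * (k i + 1))) := by
  ext x; simp [dyadicCube, Set.mem_pi, Set.mem_Ico]

lemma measurableSet_dyadicCube (j : ℤ) (k : Fin n → ℤ) :
    MeasurableSet (dyadicCube j k) := by
  rw [dyadicCube_eq]; exact MeasurableSet.univ_pi fun i => measurableSet_Ico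

lemma volume_dyadicCube (j : ℤ) (k : Fin n → ℤ) :
    volume (dyadicCube j k) = ENNReal.ofReal ((2:ℝ) ^ (-j)) ^ n := by
  rw [dyadicCube_eq, volume_pi_pi]
  have : ∀ i : Fin n, volume (Set.Ico ((2:ℝ) ^ (-j) * k i) ((2:ℝ) ^ (-j) * (k i + 1)))
      = ENNReal.ofReal ((2:ℝ) ^ (-j)) := by
    intro i; rw [Real.volume_Ico]; congr 1; ring
  simp only [this, Finset.prod_const, Finset.card_univ, Fintype.card_fin]

lemma volume_euclBall_le {R : ℝ} (hR : 0 ≤ R) :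
    volume (euclBall (n := n) R) ≤ ENNReal.ofReal ((2 * R) ^ n) := by
  have hsub : euclBall (n := n) R ⊆ Set.pi Set.univ (fun _ : Fin n => Set.Ioo (-R) R) := by
    intro x hx
    intro i _
    have := lt_of_le_of_lt (abs_coord_le_ernorm x i) hx
    exact Set.mem_Ioo.2 (abs_lt.1 this)
  calc volume (euclBall (n := n) R) ≤ volume (Set.pi Set.univ (fun _ : Fin n => Set.Ioo (-R) R)) :=
        measure_mono hsub
    _ = ENNReal.ofReal ((2 * R) ^ n) := by
        rw [volume_pi_pi]
        simp only [Real.volume_Ioo, Finset.prod_const, Finset.card_univ, Fintype.card_fin]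
        rw [← ENNReal.ofReal_pow (by linarith)]
        congr 1; ring

lemma volume_singleton_zero (hn : 0 < n) : volume ({0} : Set (Fin n → ℝ)) = 0 := by
  have h : ({0} : Set (Fin n → ℝ)) = Set.pi Set.univ (fun _ : Fin n => ({0} : Set ℝ)) := by
    ext x
    simp [Set.mem_pi, funext_iff]
  rw [h, volume_pi_pi]
  simp [Real.volume_singleton, zero_pow hn.ne']

lemma setLIntegral_le_const' {α : Type*} [MeasurableSpace α] {μ : Measure α} {s : Set α}
    (hs : MeasurableSet s) {g : α → ℝ≥0∞} {c : ℝ≥0∞} (h : ∀ x ∈ s, g x ≤ c) :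
    ∫⁻ x in s, g x ∂μ ≤ c * μ s := by
  rw [← setLIntegral_const s c]
  exact lintegral_mono_ae ((ae_restrict_iff' hs).2 (Filter.Eventually.of_forall h))

lemma const_le_setLIntegral' {α : Type*} [MeasurableSpace α] {μ : Measure α} {s : Set α}
    (hs : MeasurableSet s) {g : α → ℝ≥0∞} {c : ℝ≥0∞} (h : ∀ x ∈ s, c ≤ g x) :
    c * μ s ≤ ∫⁻ x in s, g x ∂μ := by
  rw [← setLIntegral_const s c]
  exact lintegral_mono_ae ((ae_restrict_iff' hs).2 (Filter.Eventually.of_forall h))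

lemma annulus_term_eq (R β : ℝ) (hR : 0 < R) (k : ℕ) :
    ((2:ℝ) ^ (-((k:ℝ) + 1)) * R) ^ (-β) * (2 * ((2:ℝ) ^ (-(k:ℝ)) * R)) ^ n
      = ((2:ℝ) ^ (β + n) * R ^ ((n:ℝ) - β)) * ((2:ℝ) ^ (β - n)) ^ k := by
  have h2 : (0:ℝ) ≤ 2 := by norm_num
  have e1 : (2:ℝ) * ((2:ℝ) ^ (-(k:ℝ)) * R) = ((2:ℝ) ^ (1 + -(k:ℝ))) * R := by
    rw [Real.rpow_add two_pos, Real.rpow_one]; ring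
  rw [e1, Real.mul_rpow (by positivity) hR.le, mul_pow,
    ← Real.rpow_natCast ((2:ℝ) ^ (1 + -(k:ℝ))) n, ← Real.rpow_natCast R n,
    ← Real.rpow_natCast ((2:ℝ) ^ (β - n)) k,
    ← Real.rpow_mul h2, ← Real.rpow_mul h2, ← Real.rpow_mul h2,
    mul_mul_mul_comm, ← Real.rpow_add two_pos, ← Real.rpow_add hR,
    mul_right_comm, ← Real.rpow_add two_pos]
  congr 1
  · congr 1; push_cast; ring
  · congr 1; push_cast; ring

lemma lintegral_ball19 (hn : 0 < n) {β : ℝ} (hβ0 : 0 < β) (hβn : β < (n:ℝ)) :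
    ∃ C : ℝ≥0∞, C ≠ ∞ ∧ ∀ R : ℝ, 0 < R →
      ∫⁻ x in euclBall (n := n) R, ENNReal.ofReal (ernorm x ^ (-β))
        ≤ C * ENNReal.ofReal (R ^ ((n:ℝ) - β)) := by
  have hr1 : ENNReal.ofReal ((2:ℝ) ^ (β - n)) < 1 :=
    ENNReal.ofReal_lt_one.2 (Real.rpow_lt_one_of_one_lt_of_neg one_lt_two (by linarith))
  refine ⟨ENNReal.ofReal ((2:ℝ) ^ (β + n)) * (1 - ENNReal.ofReal ((2:ℝ) ^ (β - n)))⁻¹,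
    ENNReal.mul_ne_top ENNReal.ofReal_ne_top
      (ENNReal.inv_ne_top.2 (tsub_pos_of_lt hr1).ne'), ?_⟩
  intro R hR
  set g : (Fin n → ℝ) → ℝ≥0∞ := fun x => ENNReal.ofReal (ernorm x ^ (-β)) with hg
  set A : ℕ → Set (Fin n → ℝ) := fun k =>
    euclBall ((2:ℝ) ^ (-(k:ℝ)) * R) \ euclBall ((2:ℝ) ^ (-((k:ℝ) + 1)) * R) with hA
  have hsub : euclBall (n := n) R ⊆ {0} ∪ ⋃ k, A k := by
    intro x hx
    by_cases hx0 : x = 0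
    · exact Set.mem_union_left _ (by simp [hx0])
    right
    have hex : 0 < ernorm x := ernorm_pos hx0
    have hPex : ∃ k : ℕ, (2:ℝ) ^ (-((k:ℝ) + 1)) * R ≤ ernorm x := by
      obtain ⟨m, hm⟩ := exists_pow_lt_of_lt_one (div_pos hex hR) (by norm_num : (2:ℝ)⁻¹ < 1)
      refine ⟨m, le_of_lt ?_⟩
      have h1 : (2:ℝ) ^ (-((m:ℝ) + 1)) ≤ (2:ℝ)⁻¹ ^ m := by
        rw [inv_pow, ← Real.rpow_natCast 2 m, ← Real.rpow_neg (by norm_num)]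
        exact Real.rpow_le_rpow_of_exponent_le one_le_two (by linarith)
      have h2 : (2:ℝ)⁻¹ ^ m * R < ernorm x := (lt_div_iff₀ hR).1 hm
      nlinarith [mul_le_mul_of_nonneg_right h1 hR.le]
    set k := Nat.find hPex with hk
    have hk1 : (2:ℝ) ^ (-((k:ℝ) + 1)) * R ≤ ernorm x := Nat.find_spec hPex
    have hk2 : ernorm x < (2:ℝ) ^ (-(k:ℝ)) * R := by
      rcases Nat.eq_zero_or_pos k with h0 | hpos
      · rw [h0]; norm_num; exact hx
      · obtain ⟨m, hm⟩ : ∃ m, k = m + 1 := ⟨k - 1, (Nat.succ_pred_eq_of_pos hpos).symm⟩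
        have hmin := Nat.find_min hPex (by omega : m < k)
        push_neg at hmin
        rw [hm]
        have hcast : (-(((m + 1 : ℕ)):ℝ)) = -((m:ℝ) + 1) := by push_cast; ring
        rw [hcast]
        exact hmin
    exact Set.mem_iUnion.2 ⟨k, hk2, fun hc => absurd hk1 (not_le.2 hc)⟩
  have hAnn : ∀ k : ℕ, ∫⁻ x in A k, g x ≤
      ENNReal.ofReal ((2:ℝ) ^ (β + n) * R ^ ((n:ℝ) - β)) *
        (ENNReal.ofReal ((2:ℝ) ^ (β - n))) ^ k := by
    intro k
    have hrad : (0:ℝ) < (2:ℝ) ^ (-((k:ℝ) + 1)) * R := by positivity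
    have hmeas : MeasurableSet (A k) :=
      (measurableSet_euclBall _).diff (measurableSet_euclBall _)
    have hpt : ∀ x ∈ A k, g x ≤ ENNReal.ofReal (((2:ℝ) ^ (-((k:ℝ) + 1)) * R) ^ (-β)) := by
      intro x hxA
      exact ENNReal.ofReal_le_ofReal
        (Real.rpow_le_rpow_of_nonpos hrad (not_lt.1 hxA.2) (neg_nonpos.2 hβ0.le))
    calc ∫⁻ x in A k, g x
        ≤ ENNReal.ofReal (((2:ℝ) ^ (-((k:ℝ) + 1)) * R) ^ (-β)) * volume (A k) :=
          setLIntegral_le_const' hmeas hpt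
      _ ≤ ENNReal.ofReal (((2:ℝ) ^ (-((k:ℝ) + 1)) * R) ^ (-β)) *
            ENNReal.ofReal ((2 * ((2:ℝ) ^ (-(k:ℝ)) * R)) ^ n) :=
          mul_le_mul_right
            (le_trans (measure_mono Set.diff_subset) (volume_euclBall_le (by positivity))) _
      _ = ENNReal.ofReal ((((2:ℝ) ^ (-((k:ℝ) + 1)) * R) ^ (-β)) *
            ((2 * ((2:ℝ) ^ (-(k:ℝ)) * R)) ^ n)) :=
          (ENNReal.ofReal_mul (by positivity)).symm
      _ = ENNReal.ofReal (((2:ℝ) ^ (β + n) * R ^ ((n:ℝ) - β)) * ((2:ℝ) ^ (β - n)) ^ k) := by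
          rw [annulus_term_eq R β hR k]
      _ = _ := by
          rw [ENNReal.ofReal_mul (by positivity), ENNReal.ofReal_pow (by positivity)]
  calc ∫⁻ x in euclBall (n := n) R, g x
      ≤ ∫⁻ x in ({0} : Set (Fin n → ℝ)) ∪ ⋃ k, A k, g x := lintegral_mono_set hsub
    _ ≤ (∫⁻ x in ({0} : Set (Fin n → ℝ)), g x) + ∫⁻ x in ⋃ k, A k, g x :=
        lintegral_union_le _ _ _
    _ ≤ 0 + ∑' k, ∫⁻ x in A k, g x := by
        refine add_le_add ?_ (lintegral_iUnion_le _ _)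
        rw [setLIntegral_measure_zero _ _ (volume_singleton_zero hn)]
    _ ≤ ∑' k, (ENNReal.ofReal ((2:ℝ) ^ (β + n) * R ^ ((n:ℝ) - β)) *
          (ENNReal.ofReal ((2:ℝ) ^ (β - n))) ^ k) := by
        rw [zero_add]; exact ENNReal.tsum_le_tsum hAnn
    _ = ENNReal.ofReal ((2:ℝ) ^ (β + n) * R ^ ((n:ℝ) - β)) *
          (1 - ENNReal.ofReal ((2:ℝ) ^ (β - n)))⁻¹ := by
        rw [ENNReal.tsum_mul_left, ENNReal.tsum_geometric]
    _ = _ := by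
        rw [ENNReal.ofReal_mul (by positivity)]
        ring

lemma BM_lower19 {p t : ℝ} (hp : 0 < p) (h : (Fin n → ℝ) → ℝ)
    (j : ℤ) (k : Fin n → ℤ) {m : ℝ} (hm : 0 < m)
    (hb : ∀ x ∈ dyadicCube j k, m ≤ |h x|) :
    ENNReal.ofReal (((2:ℝ) ^ (-j)) ^ ((n:ℝ) / t) * m) ≤ BMnormS p t h := by
  have hL : (0:ℝ) < (2:ℝ) ^ (-j) := zpow_pos (by norm_num) _
  set a : ℝ≥0∞ := ENNReal.ofReal ((2:ℝ) ^ (-j)) with ha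
  have ha0 : a ≠ 0 := by
    rw [ha]; simp only [ne_eq, ENNReal.ofReal_eq_zero, not_le]; exact hL
  have hat : a ≠ ⊤ := ENNReal.ofReal_ne_top
  have hvol : volume (dyadicCube j k) = a ^ n := volume_dyadicCube j k
  have hint : a ^ n * ENNReal.ofReal (m ^ p)
      ≤ ∫⁻ x in dyadicCube j k, ENNReal.ofReal (|h x| ^ p) := by
    rw [← hvol, mul_comm]
    exact const_le_setLIntegral' (measurableSet_dyadicCube j k) fun x hx =>
      ENNReal.ofReal_le_ofReal (Real.rpow_le_rpow hm.le (hb x hx) hp.le)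
  have hmp : ENNReal.ofReal (m ^ p) ^ ((1:ℝ)/p) = ENNReal.ofReal m := by
    rw [ENNReal.ofReal_rpow_of_pos (by positivity), ← Real.rpow_mul hm.le,
      mul_one_div, div_self hp.ne', Real.rpow_one]
  have key : ENNReal.ofReal (((2:ℝ) ^ (-j)) ^ ((n:ℝ) / t) * m)
      = (a ^ n) ^ (1 / t - 1 / p) * (a ^ n * ENNReal.ofReal (m ^ p)) ^ (1 / p) := by
    rw [← ENNReal.rpow_natCast a n, ← ENNReal.rpow_mul,
      ENNReal.mul_rpow_of_nonneg _ _ (by positivity : (0:ℝ) ≤ 1 / p),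
      ← ENNReal.rpow_mul, hmp, ← mul_assoc, ← ENNReal.rpow_add _ _ ha0 hat,
      show (n:ℝ) * (1 / t - 1 / p) + (n:ℝ) * (1 / p) = (n:ℝ) / t by ring,
      ENNReal.ofReal_mul (by positivity),
      show ENNReal.ofReal (((2:ℝ) ^ (-j)) ^ ((n:ℝ) / t)) = a ^ ((n:ℝ) / t) from
        (ENNReal.ofReal_rpow_of_pos hL).symm]
  refine le_trans (le_of_eq key) ?_
  have step : (a ^ n) ^ (1 / t - 1 / p) * (a ^ n * ENNReal.ofReal (m ^ p)) ^ (1 / p)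
      ≤ volume (dyadicCube j k) ^ (1 / t - 1 / p) *
        (∫⁻ x in dyadicCube j k, ENNReal.ofReal (|h x| ^ p)) ^ (1 / p) := by
    rw [hvol]
    exact mul_le_mul_right (ENNReal.rpow_le_rpow hint (by positivity)) _
  refine step.trans ?_
  unfold BMnormS
  exact le_iSup (fun jk : ℤ × (Fin n → ℤ) =>
    volume (dyadicCube jk.1 jk.2) ^ (1 / t - 1 / p) *
      (∫⁻ x in dyadicCube jk.1 jk.2, ENNReal.ofReal (|h x| ^ p)) ^ (1 / p)) ⟨j, k⟩

lemma BM_upper19 (hn : 0 < n) {p t : ℝ} (hp : 0 < p) (hpt : p < t) :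
    ∃ c₂ : ℝ≥0∞, c₂ < ∞ ∧
      BMnormS p t (fun x : Fin n → ℝ => ernorm x ^ (-((n:ℝ) / t))) ≤ c₂ := by
  have ht : 0 < t := hp.trans hpt
  have hn' : (0:ℝ) < n := Nat.cast_pos.2 hn
  set β : ℝ := (n:ℝ) * p / t with hβ
  have hβ0 : 0 < β := by positivity
  have hβn : β < (n:ℝ) := by rw [hβ, div_lt_iff₀ ht]; nlinarith
  obtain ⟨C, hC, hball⟩ := lintegral_ball19 hn hβ0 hβn
  have hsq : (0:ℝ) < Real.sqrt n := Real.sqrt_pos.2 hn'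
  set C' : ℝ≥0∞ := C * ENNReal.ofReal ((Real.sqrt n) ^ ((n:ℝ) - β))
      + ENNReal.ofReal ((Real.sqrt n) ^ (-β)) with hC'
  have hC'top : C' ≠ ∞ := by
    rw [hC']
    exact ENNReal.add_ne_top.2
      ⟨ENNReal.mul_ne_top hC ENNReal.ofReal_ne_top, ENNReal.ofReal_ne_top⟩
  have cube : ∀ (j : ℤ) (k : Fin n → ℤ),
      ∫⁻ x in dyadicCube j k, ENNReal.ofReal (ernorm x ^ (-β))
        ≤ C' * ENNReal.ofReal (((2:ℝ) ^ (-j)) ^ ((n:ℝ) - β)) := by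
    intro j k
    set L : ℝ := (2:ℝ) ^ (-j) with hLdef
    have hL : 0 < L := zpow_pos (by norm_num) _
    set s : ℝ := Real.sqrt n * L with hsdef
    have hs0 : 0 < s := by positivity
    have hsplit : dyadicCube j k ⊆ euclBall (n := n) s ∪ (dyadicCube j k \ euclBall s) := by
      intro x hx
      by_cases hxb : x ∈ euclBall (n := n) s
      · exact Set.mem_union_left _ hxb
      · exact Set.mem_union_right _ ⟨hx, hxb⟩
    have h1 : ∫⁻ x in euclBall (n := n) s, ENNReal.ofReal (ernorm x ^ (-β))
        ≤ C * ENNReal.ofReal (s ^ ((n:ℝ) - β)) := hball s hs0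
    have h2 : ∫⁻ x in dyadicCube j k \ euclBall s, ENNReal.ofReal (ernorm x ^ (-β))
        ≤ ENNReal.ofReal (s ^ (-β)) * volume (dyadicCube (n := n) j k) := by
      refine le_trans (setLIntegral_le_const' (c := ENNReal.ofReal (s ^ (-β)))
        ((measurableSet_dyadicCube j k).diff (measurableSet_euclBall s)) ?_)
        (mul_le_mul_right (measure_mono Set.diff_subset) _)
      intro x hx
      exact ENNReal.ofReal_le_ofReal
        (Real.rpow_le_rpow_of_nonpos hs0 (not_lt.1 hx.2) (neg_nonpos.2 hβ0.le))
    calc ∫⁻ x in dyadicCube j k, ENNReal.ofReal (ernorm x ^ (-β))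
        ≤ ∫⁻ x in euclBall (n := n) s ∪ (dyadicCube j k \ euclBall s),
            ENNReal.ofReal (ernorm x ^ (-β)) := lintegral_mono_set hsplit
      _ ≤ C * ENNReal.ofReal (s ^ ((n:ℝ) - β)) +
            ENNReal.ofReal (s ^ (-β)) * volume (dyadicCube (n := n) j k) :=
          le_trans (lintegral_union_le _ _ _) (add_le_add h1 h2)
      _ = C' * ENNReal.ofReal (L ^ ((n:ℝ) - β)) := by
          have r2 : s ^ (-β) * L ^ (n:ℕ) = (Real.sqrt n) ^ (-β) * L ^ ((n:ℝ) - β) := by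
            rw [hsdef, Real.mul_rpow hsq.le hL.le, ← Real.rpow_natCast L n, mul_assoc,
              ← Real.rpow_add hL]
            congr 2
            ring
          have e1 : ENNReal.ofReal (s ^ ((n:ℝ) - β))
              = ENNReal.ofReal ((Real.sqrt n) ^ ((n:ℝ) - β)) *
                  ENNReal.ofReal (L ^ ((n:ℝ) - β)) := by
            rw [hsdef, Real.mul_rpow hsq.le hL.le, ENNReal.ofReal_mul (by positivity)]
          have e2 : ENNReal.ofReal (s ^ (-β)) * volume (dyadicCube (n := n) j k)
              = ENNReal.ofReal ((Real.sqrt n) ^ (-β)) *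
                  ENNReal.ofReal (L ^ ((n:ℝ) - β)) := by
            rw [volume_dyadicCube, ← ENNReal.ofReal_pow hL.le,
              ← ENNReal.ofReal_mul (by positivity), r2,
              ENNReal.ofReal_mul (by positivity)]
          rw [e1, e2, hC', add_mul]
          ring
  refine ⟨C' ^ ((1:ℝ)/p), ENNReal.rpow_lt_top_of_nonneg (by positivity) hC'top, ?_⟩
  unfold BMnormS
  refine iSup_le ?_
  rintro ⟨j, k⟩
  have hL : (0:ℝ) < (2:ℝ) ^ (-j) := zpow_pos (by norm_num) _
  set a : ℝ≥0∞ := ENNReal.ofReal ((2:ℝ) ^ (-j)) with hadef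
  have ha0 : a ≠ 0 := by
    rw [hadef]; simp only [ne_eq, ENNReal.ofReal_eq_zero, not_le]; exact hL
  have hat : a ≠ ⊤ := ENNReal.ofReal_ne_top
  have hinteq : ∫⁻ x in dyadicCube j k,
        ENNReal.ofReal (|(fun x : Fin n → ℝ => ernorm x ^ (-((n:ℝ) / t))) x| ^ p)
      = ∫⁻ x in dyadicCube j k, ENNReal.ofReal (ernorm x ^ (-β)) := by
    refine lintegral_congr fun x => ?_
    show ENNReal.ofReal (|ernorm x ^ (-((n:ℝ) / t))| ^ p) = ENNReal.ofReal (ernorm x ^ (-β))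
    congr 1
    rcases (ernorm_nonneg x).eq_or_lt with h0 | hpos
    · rw [← h0, Real.zero_rpow (neg_ne_zero.2 (by positivity : (0:ℝ) < (n:ℝ)/t).ne'),
        abs_zero, Real.zero_rpow hp.ne',
        Real.zero_rpow (neg_ne_zero.2 hβ0.ne')]
    · rw [abs_of_nonneg (Real.rpow_nonneg (ernorm_nonneg x) _),
        ← Real.rpow_mul (ernorm_nonneg x)]
      congr 1
      rw [hβ]; ring
  have hexp : (n:ℝ) * (1 / t - 1 / p) + ((n:ℝ) - β) * (1 / p) = 0 := by
    rw [hβ]; field_simp; ring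
  calc volume (dyadicCube j k) ^ (1 / t - 1 / p) *
        (∫⁻ x in dyadicCube j k,
          ENNReal.ofReal (|(fun x : Fin n → ℝ => ernorm x ^ (-((n:ℝ) / t))) x| ^ p)) ^ (1 / p)
      = (a ^ n) ^ (1 / t - 1 / p) *
          (∫⁻ x in dyadicCube j k, ENNReal.ofReal (ernorm x ^ (-β))) ^ (1 / p) := by
        rw [volume_dyadicCube, hinteq]
    _ ≤ (a ^ n) ^ (1 / t - 1 / p) *
          (C' * ENNReal.ofReal (((2:ℝ) ^ (-j)) ^ ((n:ℝ) - β))) ^ (1 / p) :=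
        mul_le_mul_right (ENNReal.rpow_le_rpow (cube j k) (by positivity)) _
    _ = C' ^ ((1:ℝ)/p) := by
        rw [ENNReal.mul_rpow_of_nonneg _ _ (by positivity : (0:ℝ) ≤ 1 / p),
          show ENNReal.ofReal (((2:ℝ) ^ (-j)) ^ ((n:ℝ) - β)) = a ^ ((n:ℝ) - β) from
            (ENNReal.ofReal_rpow_of_pos hL).symm,
          ← ENNReal.rpow_natCast a n, ← ENNReal.rpow_mul, ← ENNReal.rpow_mul,
          mul_left_comm, ← ENNReal.rpow_add _ _ ha0 hat, hexp, ENNReal.rpow_zero,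
          mul_one, one_div]
  
lemma BM_tail19 (hn : 0 < n) {p t : ℝ} (hp : 0 < p) (hpt : p < t) :
    ∀ R : ℝ, 1 ≤ R →
      ENNReal.ofReal ((2 * Real.sqrt n) ^ (-((n:ℝ) / t))) ≤
        BMnormS p t ((euclBall (n := n) R)ᶜ.indicator
          (fun x => ernorm x ^ (-((n:ℝ) / t)))) := by
  intro R hR
  have ht : 0 < t := hp.trans hpt
  have hn' : (0:ℝ) < n := Nat.cast_pos.2 hn
  have hsq : (0:ℝ) < Real.sqrt n := Real.sqrt_pos.2 hn'
  obtain ⟨m, hm⟩ := pow_unbounded_of_one_lt R (one_lt_two (α := ℝ))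
  set j : ℤ := -((m + 1 : ℕ) : ℤ) with hj
  set i0 : Fin n := ⟨0, hn⟩ with hi0
  set k : Fin n → ℤ := fun i => if i = i0 then 1 else 0 with hk
  have hki0 : ((k i0 : ℤ) : ℝ) = 1 := by simp [hk]
  have hkother : ∀ i, i ≠ i0 → ((k i : ℤ) : ℝ) = 0 := by intro i hi; simp [hk, hi]
  have hL : (0:ℝ) < (2:ℝ) ^ (-j) := zpow_pos (by norm_num) _
  have hRL : R < (2:ℝ) ^ (-j) := by
    rw [hj, neg_neg, zpow_natCast]
    calc R < 2 ^ m := hm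
      _ < 2 ^ (m + 1) := by
          have : (1:ℝ) < 2 := one_lt_two
          calc (2:ℝ) ^ m < 2 ^ m * 2 := by nlinarith [pow_pos (zero_lt_two (α := ℝ)) m]
            _ = 2 ^ (m + 1) := (pow_succ 2 m).symm
  have hcube : ∀ x ∈ dyadicCube (n := n) j k,
      (Real.sqrt n * (2 * (2:ℝ) ^ (-j))) ^ (-((n:ℝ) / t)) ≤
        |(euclBall (n := n) R)ᶜ.indicator (fun x => ernorm x ^ (-((n:ℝ) / t))) x| := by
    intro x hx
    have hx0 : (2:ℝ) ^ (-j) ≤ x i0 := by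
      have h1 := (hx i0).1
      rwa [hki0, mul_one] at h1
    have hxu : ∀ i, |x i| ≤ 2 * (2:ℝ) ^ (-j) := by
      intro i
      by_cases hi : i = i0
      · rw [hi]
        have h2 := (hx i0).2
        rw [hki0] at h2
        rw [abs_of_nonneg (le_trans hL.le hx0)]
        linarith
      · have h1 := (hx i).1
        have h2 := (hx i).2
        rw [hkother i hi, mul_zero] at h1
        rw [hkother i hi, zero_add, mul_one] at h2
        rw [abs_of_nonneg h1]
        linarith
    have hern_u : ernorm x ≤ Real.sqrt n * (2 * (2:ℝ) ^ (-j)) :=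
      ernorm_le_of_le (by positivity) hxu
    have hern_l : (2:ℝ) ^ (-j) ≤ ernorm x :=
      le_trans hx0 (le_trans (le_abs_self _) (abs_coord_le_ernorm x i0))
    have hxnotin : x ∉ euclBall (n := n) R := not_lt.2 (le_trans hRL.le hern_l)
    rw [Set.indicator_of_mem (Set.mem_compl hxnotin),
      abs_of_nonneg (Real.rpow_nonneg (ernorm_nonneg x) _)]
    exact Real.rpow_le_rpow_of_nonpos (lt_of_lt_of_le hL hern_l) hern_u
      (neg_nonpos.2 (by positivity))
  have hmain := BM_lower19 (t := t) hp _ j k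
    (m := (Real.sqrt n * (2 * (2:ℝ) ^ (-j))) ^ (-((n:ℝ) / t))) (by positivity) hcube
  refine le_trans (le_of_eq ?_) hmain
  congr 1
  rw [show Real.sqrt n * (2 * (2:ℝ) ^ (-j)) = (2 * Real.sqrt n) * (2:ℝ) ^ (-j) by ring,
    Real.mul_rpow (by positivity) hL.le, mul_left_comm, ← Real.rpow_add hL]
  simp

end aux19

/-- `f(x) = |x|^{-n/t}` has `‖f‖_{M_p^{t,∞}} ≈ 1`, yet its tails
`f − χ_{B(0,2^j)} f` have `M_p^{t,∞}` norm bounded below; hence `{f}` does not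
uniformly vanish at infinity. -/
theorem stmt19 {n : ℕ} (hn : 0 < n) (p t : ℝ) (hp : 0 < p) (hpt : p < t) :
    (∃ c₁ c₂ : ℝ≥0∞, 0 < c₁ ∧ c₂ < ∞ ∧
      c₁ ≤ BMnormS p t (fun x : Fin n → ℝ => ernorm x ^ (-((n : ℝ) / t))) ∧
      BMnormS p t (fun x : Fin n → ℝ => ernorm x ^ (-((n : ℝ) / t))) ≤ c₂) ∧
    (∃ c : ℝ≥0∞, 0 < c ∧ ∀ j : ℕ,
      c ≤ BMnormS p t (fun x : Fin n → ℝ =>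
        ernorm x ^ (-((n : ℝ) / t)) -
          (euclBall (n := n) (2 ^ j)).indicator
            (fun x => ernorm x ^ (-((n : ℝ) / t))) x)) ∧
    ¬ Filter.Tendsto
        (fun R : ℝ => BMnormS p t
          ((euclBall (n := n) R)ᶜ.indicator
            (fun x => ernorm x ^ (-((n : ℝ) / t)))))
        Filter.atTop (nhds 0) := by
  have ht : 0 < t := hp.trans hpt
  have hn' : (0:ℝ) < n := Nat.cast_pos.2 hn
  have hsq : (0:ℝ) < Real.sqrt n := Real.sqrt_pos.2 hn'
  obtain ⟨c₂, hc₂, hupper⟩ := BM_upper19 hn hp hpt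
  refine ⟨⟨ENNReal.ofReal ((Real.sqrt n * 2) ^ (-((n:ℝ)/t))), c₂,
    ENNReal.ofReal_pos.2 (by positivity), hc₂, ?_, hupper⟩, ?_, ?_⟩
  · -- lower bound via the unit cube [1,2)^n
    have hcube : ∀ x ∈ dyadicCube (n := n) 0 (fun _ => 1),
        (Real.sqrt n * 2) ^ (-((n:ℝ)/t)) ≤ |ernorm x ^ (-((n:ℝ)/t))| := by
      intro x hx
      have h1 : ∀ i, (1:ℝ) ≤ x i ∧ x i < 2 := by
        intro i
        have h := hx i
        norm_num at h
        exact h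
      have hxu : ∀ i, |x i| ≤ 2 := fun i => abs_le.2 ⟨by linarith [(h1 i).1], (h1 i).2.le⟩
      have hern_u : ernorm x ≤ Real.sqrt n * 2 := ernorm_le_of_le (by norm_num) hxu
      have hern_l : (1:ℝ) ≤ ernorm x :=
        le_trans (h1 ⟨0, hn⟩).1 (le_trans (le_abs_self _) (abs_coord_le_ernorm x ⟨0, hn⟩))
      rw [abs_of_nonneg (Real.rpow_nonneg (ernorm_nonneg x) _)]
      exact Real.rpow_le_rpow_of_nonpos (by linarith) hern_u (neg_nonpos.2 (by positivity))
    have hmain := BM_lower19 (t := t) hp _ 0 (fun _ => 1)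
      (m := (Real.sqrt n * 2) ^ (-((n:ℝ)/t))) (by positivity) hcube
    refine le_trans (le_of_eq ?_) hmain
    congr 1
    rw [show ((2:ℝ) ^ (-(0:ℤ))) = (1:ℝ) by norm_num, Real.one_rpow, one_mul]
  · -- tails are bounded below
    refine ⟨ENNReal.ofReal ((2 * Real.sqrt n) ^ (-((n:ℝ)/t))),
      ENNReal.ofReal_pos.2 (by positivity), ?_⟩
    intro j
    have heq : (fun x : Fin n → ℝ =>
        ernorm x ^ (-((n:ℝ)/t)) -
          (euclBall (n := n) (2 ^ j)).indicator (fun x => ernorm x ^ (-((n:ℝ)/t))) x)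
        = (euclBall (n := n) ((2:ℝ) ^ j))ᶜ.indicator (fun x => ernorm x ^ (-((n:ℝ)/t))) := by
      funext x
      by_cases hx : x ∈ euclBall (n := n) ((2:ℝ) ^ j)
      · rw [Set.indicator_of_mem hx, Set.indicator_of_notMem (Set.notMem_compl_iff.2 hx),
          sub_self]
      · rw [Set.indicator_of_notMem hx, Set.indicator_of_mem (Set.mem_compl hx), sub_zero]
    rw [heq]
    exact BM_tail19 hn hp hpt _ (one_le_pow₀ one_le_two)
  · -- no uniform vanishing at infinity
    intro hT
    set c : ℝ≥0∞ := ENNReal.ofReal ((2 * Real.sqrt n) ^ (-((n:ℝ)/t))) with hc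
    have hcpos : 0 < c := ENNReal.ofReal_pos.2 (by positivity)
    have h1 := hT.eventually_lt_const hcpos
    obtain ⟨R, hR1, hR2⟩ := ((Filter.eventually_ge_atTop (1:ℝ)).and h1).exists
    exact absurd (BM_tail19 hn hp hpt R hR1) (not_le.2 hR2)

end
end
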